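/- arXiv:2006.00198 — 3 statements merged into one kernel-verified Lean document; each statement's English description precedes it below -/
import Mathlib

section
/- Let n ≥ 2 and k₊ ≥ k₋ ≥ 0 be integers with k₊ and k₋ not both 0. Suppose the error-ball B(n,2,k₊,k₋) tiles ℤⁿ by some lattice Λ ⊆ ℤⁿ (additive subgroup of ℤⁿ), and suppose the cardinality |B(n,2,k₊,k₋)| = C(n,2)·(k₊+k₋)² + n·(k₊+k₋) + 1 is even. Then there exists an integer ℓ such that 4·(k₊+k₋)·n = 4ℓ² − (k₊+k₋−3)² + 8. -/
open Finset

/-- Hamming weight of an integer vector: the number of nonzero entries. -/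
def wt {n : ℕ} (x : Fin n → ℤ) : ℕ := (Finset.univ.filter (fun i => x i ≠ 0)).card

/-- The `(n,t,k₊,k₋)`-error-ball in `ℤⁿ`. -/
def errBall (n t : ℕ) (kp km : ℤ) : Set (Fin n → ℤ) :=
  {x | (∀ i, -km ≤ x i ∧ x i ≤ kp) ∧ wt x ≤ t}

/-- `Tiles B T` : every `z ∈ ℤⁿ` is uniquely `z = v + b` with `v ∈ T` and `b ∈ B`. -/
def Tiles {n : ℕ} (B T : Set (Fin n → ℤ)) : Prop :=
  ∀ z : Fin n → ℤ, ∃! p : (Fin n → ℤ) × (Fin n → ℤ),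
    p.1 ∈ T ∧ p.2 ∈ B ∧ z = p.1 + p.2


lemma zmod2_cases : ∀ c : ZMod 2, c = 0 ∨ c = 1 := by decide

lemma exists_hom_to_zmod2 (Q : Type*) [AddCommGroup Q] [Fintype Q]
    (h2 : 2 ∣ Fintype.card Q) :
    ∃ χ : Q →+ ZMod 2, ∃ x : Q, χ x = 1 := by
  haveI : Fact (Nat.Prime 2) := ⟨Nat.prime_two⟩
  obtain ⟨a, ha⟩ := exists_prime_addOrderOf_dvd_card (G := Q) 2 h2
  have ha0 : a ≠ 0 := by
    intro h; rw [h] at ha; simp at ha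
  let D : Q →+ Q := AddMonoidHom.mk' (fun x => x + x) (by intro x y; abel)
  have hD : ¬ Function.Surjective D := by
    intro hs
    have hinj : Function.Injective D := Finite.injective_iff_surjective.mpr hs
    have ha2 : D a = 0 := by
      have h1 : addOrderOf a • a = 0 := addOrderOf_nsmul_eq_zero a
      rw [ha] at h1
      simpa [D, two_nsmul] using h1
    exact ha0 (hinj (by simp [D, ha2]))
  let H : AddSubgroup Q := D.range
  have hH : ∀ x : Q, 2 • x ∈ H := fun x => ⟨x, by simp [D, two_nsmul]⟩
  letI : Module (ZMod 2) (Q ⧸ H) := QuotientAddGroup.zmodModule hH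
  obtain ⟨c, hc⟩ := not_forall.mp hD
  have hc' : ¬ ∃ y, D y = c := hc
  set π : Q →+ Q ⧸ H := QuotientAddGroup.mk' H with hπ
  have hv0 : π c ≠ 0 := by
    intro h
    rw [hπ, QuotientAddGroup.mk'_apply, QuotientAddGroup.eq_zero_iff] at h
    exact hc' h
  let b := Module.Basis.ofVectorSpace (ZMod 2) (Q ⧸ H)
  have hne : Nonempty (Module.Basis.ofVectorSpaceIndex (ZMod 2) (Q ⧸ H)) := by
    by_contra hemp
    haveI : IsEmpty (Module.Basis.ofVectorSpaceIndex (ZMod 2) (Q ⧸ H)) := not_nonempty_iff.mp hemp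
    have hsub : Subsingleton (Q ⧸ H) := b.repr.toEquiv.subsingleton
    exact hv0 (Subsingleton.elim _ _)
  obtain ⟨i⟩ := hne
  let f : (Q ⧸ H) →ₗ[ZMod 2] ZMod 2 := b.coord i
  have hf : f (b i) = 1 := by simp [f]
  refine ⟨(f.toAddMonoidHom.comp π), ?_⟩
  obtain ⟨x, hx⟩ := QuotientAddGroup.mk'_surjective H (b i)
  refine ⟨x, ?_⟩
  have hx' : π x = b i := by rw [hπ]; exact hx
  show f (π x) = 1
  rw [hx', hf]


noncomputable def ballF (n : ℕ) (kp km : ℤ) : Finset (Fin n → ℤ) :=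
  (Fintype.piFinset (fun _ => Finset.Icc (-km) kp)).filter (fun x => wt x ≤ 2)


lemma single_ne {n : ℕ} {i l : Fin n} (v : ℤ) (h : l ≠ i) :
    (Pi.single i v : Fin n → ℤ) l = 0 := by
  simp [Pi.single_eq_of_ne h]

lemma single_same {n : ℕ} (i : Fin n) (v : ℤ) :
    (Pi.single i v : Fin n → ℤ) i = v := by simp

lemma mem_ballF {n : ℕ} {kp km : ℤ} {x : Fin n → ℤ} :
    x ∈ ballF n kp km ↔ (∀ i, x i ∈ Finset.Icc (-km) kp) ∧ wt x ≤ 2 := by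
  simp [ballF, Fintype.mem_piFinset]

lemma wt_eq_zero_iff {n : ℕ} {x : Fin n → ℤ} : wt x = 0 ↔ x = 0 := by
  constructor
  · intro h
    rw [wt, Finset.card_eq_zero, Finset.eq_empty_iff_forall_notMem] at h
    funext i
    have := h i
    simpa using this
  · intro h; subst h; simp [wt]

lemma supp_single {n : ℕ} (i : Fin n) (v : ℤ) (hv : v ≠ 0) :
    Finset.univ.filter (fun l => (Pi.single i v : Fin n → ℤ) l ≠ 0) = {i} := by
  ext l
  simp only [Finset.mem_filter, Finset.mem_univ, true_and, Finset.mem_singleton]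
  constructor
  · intro h
    by_contra hl
    exact h (single_ne v hl)
  · intro h; subst h; simpa using hv

lemma wt_single {n : ℕ} (i : Fin n) (v : ℤ) (hv : v ≠ 0) :
    wt (Pi.single i v : Fin n → ℤ) = 1 := by
  rw [wt, supp_single i v hv]; simp

lemma supp_pair {n : ℕ} {i j : Fin n} (hij : i ≠ j) (v w : ℤ) (hv : v ≠ 0) (hw : w ≠ 0) :
    Finset.univ.filter
      (fun l => (Pi.single i v + Pi.single j w : Fin n → ℤ) l ≠ 0) = {i, j} := by
  ext l
  simp only [Finset.mem_filter, Finset.mem_univ, true_and, Finset.mem_insert,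
    Finset.mem_singleton, Pi.add_apply]
  constructor
  · intro h
    by_contra hl
    push_neg at hl
    rw [single_ne v hl.1, single_ne w hl.2] at h
    simp at h
  · rintro (h | h) <;> subst h
    · rw [single_same, single_ne w hij]; simpa using hv
    · rw [single_same, single_ne v (Ne.symm hij)]; simpa using hw

lemma wt_pair {n : ℕ} {i j : Fin n} (hij : i ≠ j) (v w : ℤ) (hv : v ≠ 0) (hw : w ≠ 0) :
    wt (Pi.single i v + Pi.single j w : Fin n → ℤ) = 2 := by
  rw [wt, supp_pair hij v w hv hw, Finset.card_insert_of_notMem (by simpa using hij),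
    Finset.card_singleton]

lemma eq_single_of_supp {n : ℕ} {x : Fin n → ℤ} {i : Fin n}
    (h : Finset.univ.filter (fun l => x l ≠ 0) = {i}) : x = Pi.single i (x i) := by
  funext l
  rcases eq_or_ne l i with rfl | hl
  · simp
  · rw [single_ne _ hl]
    by_contra hxl
    have : l ∈ Finset.univ.filter (fun l => x l ≠ 0) := by simpa using hxl
    rw [h] at this
    exact hl (Finset.mem_singleton.mp this)

lemma eq_pair_of_supp {n : ℕ} {x : Fin n → ℤ} {i j : Fin n} (hij : i ≠ j)
    (h : Finset.univ.filter (fun l => x l ≠ 0) = {i, j}) :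
    x = Pi.single i (x i) + Pi.single j (x j) := by
  funext l
  rcases eq_or_ne l i with rfl | hl
  · rw [Pi.add_apply, single_same, single_ne _ hij, add_zero]
  rcases eq_or_ne l j with rfl | hl2
  · rw [Pi.add_apply, single_ne _ hl, single_same, zero_add]
  · rw [Pi.add_apply, Pi.single_eq_of_ne hl, Pi.single_eq_of_ne hl2]
    by_contra hxl
    have : l ∈ Finset.univ.filter (fun l => x l ≠ 0) := by simpa using hxl
    rw [h] at this
    simp [hl, hl2] at this

lemma sq_sum_split {n : ℕ} (g : Fin n → ℤ) :
    (∑ i, g i)^2 = ∑ i, (g i)^2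
      + 2 * ∑ p ∈ (Finset.univ ×ˢ Finset.univ).filter
          (fun p : Fin n × Fin n => p.1 < p.2), g p.1 * g p.2 := by
  have h1 : (∑ i, g i)^2 = ∑ p ∈ Finset.univ ×ˢ Finset.univ, g p.1 * g p.2 := by
    rw [sq, Finset.sum_mul_sum, Finset.sum_product]
  rw [h1, ← Finset.sum_filter_add_sum_filter_not (Finset.univ ×ˢ Finset.univ)
    (fun p : Fin n × Fin n => p.1 < p.2) (fun p => g p.1 * g p.2),
    ← Finset.sum_filter_add_sum_filter_not ((Finset.univ ×ˢ Finset.univ).filter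
      (fun p : Fin n × Fin n => ¬ p.1 < p.2)) (fun p => p.1 = p.2) (fun p => g p.1 * g p.2)]
  have hdiag : ∑ p ∈ (((Finset.univ ×ˢ Finset.univ).filter
      (fun p : Fin n × Fin n => ¬ p.1 < p.2)).filter (fun p => p.1 = p.2)),
      g p.1 * g p.2 = ∑ i, (g i)^2 := by
    rw [Finset.filter_filter]
    apply Finset.sum_nbij' (i := fun p : Fin n × Fin n => p.1) (j := fun i : Fin n => (i, i))
    · intro a ha; simp
    · intro a ha; simp
    · intro a ha; simp at ha; rcases a with ⟨a1, a2⟩; simp at ha ⊢; omega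
    · intro a ha; simp
    · intro a ha
      simp only [Finset.mem_filter] at ha
      rcases a with ⟨a1, a2⟩
      obtain ⟨-, -, h⟩ := ha
      simp only at h
      subst h
      rw [sq]
  have hswap : ∑ p ∈ (((Finset.univ ×ˢ Finset.univ).filter
      (fun p : Fin n × Fin n => ¬ p.1 < p.2)).filter (fun p => ¬ p.1 = p.2)),
      g p.1 * g p.2
      = ∑ p ∈ ((Finset.univ ×ˢ Finset.univ).filter
          (fun p : Fin n × Fin n => p.1 < p.2)), g p.1 * g p.2 := by
    apply Finset.sum_nbij' (i := fun p : Fin n × Fin n => (p.2, p.1))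
      (j := fun p : Fin n × Fin n => (p.2, p.1))
    · intro a ha; simp at ha ⊢; omega
    · intro a ha; simp at ha ⊢; omega
    · intro a ha; simp
    · intro a ha; simp
    · intro a ha; rw [mul_comm]
  rw [hdiag, hswap]
  ring


section
variable {n : ℕ} {kp km : ℤ}

lemma single_mem_ballF (hkm : 0 ≤ km) (hkp : 0 ≤ kp) (i : Fin n) {v : ℤ}
    (hv : v ∈ (Finset.Icc (-km) kp).erase 0) : (Pi.single i v : Fin n → ℤ) ∈ ballF n kp km := by
  obtain ⟨hv0, hvI⟩ := Finset.mem_erase.mp hv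
  rw [mem_ballF]
  constructor
  · intro l
    rcases eq_or_ne l i with rfl | hl
    · rwa [single_same]
    · rw [single_ne _ hl]; simp [Finset.mem_Icc]; omega
  · rw [wt_single i v hv0]; omega

lemma sum_wt1 (hkm : 0 ≤ km) (hkp : 0 ≤ kp) (F : (Fin n → ℤ) → ℤ) :
    ∑ x ∈ (ballF n kp km).filter (fun x => wt x = 1), F x
      = ∑ i, ∑ v ∈ (Finset.Icc (-km) kp).erase 0, F (Pi.single i v) := by
  rw [← Finset.sum_product']
  rw [show (ballF n kp km).filter (fun x => wt x = 1)
      = (Finset.univ ×ˢ (Finset.Icc (-km) kp).erase 0).image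
          (fun p : Fin n × ℤ => (Pi.single p.1 p.2 : Fin n → ℤ)) from ?_]
  · rw [Finset.sum_image ?_]
    intro p hp q hq hpq
    simp only [Finset.mem_coe, Finset.mem_product, Finset.mem_erase] at hp hq
    beta_reduce at hpq
    have h1 : p.2 ≠ 0 := hp.2.1
    have h2 : q.2 ≠ 0 := hq.2.1
    have heq : p.1 = q.1 := by
      by_contra hne
      have := congrFun hpq p.1
      rw [single_same, single_ne _ hne] at this
      exact h1 this
    have : p.2 = q.2 := by
      have := congrFun hpq p.1
      rwa [single_same, heq, single_same] at this
    exact Prod.ext heq this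
  · ext x
    simp only [Finset.mem_image, Finset.mem_filter, Finset.mem_product, Finset.mem_univ, true_and]
    constructor
    · rintro ⟨hx, hw⟩
      obtain ⟨i, hi⟩ := Finset.card_eq_one.mp hw
      have hxi : x = Pi.single i (x i) := eq_single_of_supp hi
      refine ⟨(i, x i), ?_, hxi.symm⟩
      have hxi0 : x i ≠ 0 := by
        have : i ∈ Finset.univ.filter (fun l => x l ≠ 0) := by rw [hi]; simp
        simpa using this
      have hb := (mem_ballF.mp hx).1 i
      exact Finset.mem_erase.mpr ⟨hxi0, hb⟩
    · rintro ⟨⟨i, v⟩, hv, rfl⟩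
      have hv0 : v ≠ 0 := (Finset.mem_erase.mp hv).1
      exact ⟨single_mem_ballF hkm hkp i hv, wt_single i v hv0⟩

lemma pair_mem_ballF (hkm : 0 ≤ km) (hkp : 0 ≤ kp) {i j : Fin n} (hij : i ≠ j) {v w : ℤ}
    (hv : v ∈ (Finset.Icc (-km) kp).erase 0) (hw : w ∈ (Finset.Icc (-km) kp).erase 0) :
    (Pi.single i v + Pi.single j w : Fin n → ℤ) ∈ ballF n kp km := by
  obtain ⟨hv0, hvI⟩ := Finset.mem_erase.mp hv
  obtain ⟨hw0, hwI⟩ := Finset.mem_erase.mp hw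
  rw [mem_ballF]
  constructor
  · intro l
    rcases eq_or_ne l i with rfl | hl
    · rw [Pi.add_apply, single_same, single_ne _ hij, add_zero]; exact hvI
    rcases eq_or_ne l j with rfl | hl2
    · rw [Pi.add_apply, single_ne _ hl, single_same, zero_add]; exact hwI
    · rw [Pi.add_apply, single_ne _ hl, single_ne _ hl2]
      simp [Finset.mem_Icc]; omega
  · rw [wt_pair hij v w hv0 hw0]

set_option maxHeartbeats 2000000 in
lemma sum_wt2 (hkm : 0 ≤ km) (hkp : 0 ≤ kp) (F : (Fin n → ℤ) → ℤ)
    (hmul : ∀ (i j : Fin n) (v w : ℤ), i ≠ j →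
      F (Pi.single i v + Pi.single j w) = F (Pi.single i v) * F (Pi.single j w)) :
    ∑ x ∈ (ballF n kp km).filter (fun x => wt x = 2), F x
      = ∑ p ∈ (Finset.univ ×ˢ Finset.univ).filter (fun p : Fin n × Fin n => p.1 < p.2),
          (∑ v ∈ (Finset.Icc (-km) kp).erase 0, F (Pi.single p.1 v))
          * (∑ w ∈ (Finset.Icc (-km) kp).erase 0, F (Pi.single p.2 w)) := by
  set I := (Finset.Icc (-km) kp).erase 0 with hIdef
  set P₁ := (Finset.univ ×ˢ Finset.univ).filter (fun p : Fin n × Fin n => p.1 < p.2) with hP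
  have step1 : ∀ p ∈ P₁, (∑ v ∈ I, F (Pi.single p.1 v)) * (∑ w ∈ I, F (Pi.single p.2 w))
      = ∑ q ∈ I ×ˢ I, F (Pi.single p.1 q.1 + Pi.single p.2 q.2) := by
    intro p hp
    have hne : p.1 ≠ p.2 := by
      rw [hP] at hp; simp only [Finset.mem_filter] at hp; exact ne_of_lt hp.2
    rw [Finset.sum_mul_sum, ← Finset.sum_product']
    apply Finset.sum_congr rfl
    intro q hq
    rw [hmul _ _ _ _ hne]
  rw [Finset.sum_congr rfl step1]
  rw [show (∑ p ∈ P₁, ∑ q ∈ I ×ˢ I, F (Pi.single p.1 q.1 + Pi.single p.2 q.2))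
      = ∑ r ∈ P₁ ×ˢ (I ×ˢ I),
          F (Pi.single r.1.1 r.2.1 + Pi.single r.1.2 r.2.2) from
    (Finset.sum_product (s := P₁) (t := I ×ˢ I)
      (f := fun r => F (Pi.single r.1.1 r.2.1 + Pi.single r.1.2 r.2.2))).symm]
  rw [show (ballF n kp km).filter (fun x => wt x = 2)
      = (P₁ ×ˢ (I ×ˢ I)).image
          (fun r : (Fin n × Fin n) × ℤ × ℤ =>
            (Pi.single r.1.1 r.2.1 + Pi.single r.1.2 r.2.2 : Fin n → ℤ)) from ?_]
  · rw [Finset.sum_image ?_]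
    -- injectivity
    intro r hr r' hr' hrr
    obtain ⟨⟨i, j⟩, v, w⟩ := r
    obtain ⟨⟨i', j'⟩, v', w'⟩ := r'
    simp only [Finset.mem_coe, hP, hIdef, Finset.mem_product, Finset.mem_filter, Finset.mem_univ, true_and,
      Finset.mem_erase] at hr hr'
    obtain ⟨hij, ⟨hv0, -⟩, hw0, -⟩ := hr
    obtain ⟨hij', ⟨hv0', -⟩, hw0', -⟩ := hr'
    simp only at hrr
    have hsupp : ({i, j} : Finset (Fin n)) = {i', j'} := by
      rw [← supp_pair (ne_of_lt hij) v w hv0 hw0, ← supp_pair (ne_of_lt hij') v' w' hv0' hw0']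
      rw [hrr]
    have h1 : i = i' ∨ i = j' := by
      have : i ∈ ({i', j'} : Finset (Fin n)) := by rw [← hsupp]; simp
      simpa using this
    have h2 : j = i' ∨ j = j' := by
      have : j ∈ ({i', j'} : Finset (Fin n)) := by rw [← hsupp]; simp
      simpa using this
    have h3 : i' = i ∨ i' = j := by
      have : i' ∈ ({i, j} : Finset (Fin n)) := by rw [hsupp]; simp
      simpa using this
    have hii : i = i' ∧ j = j' := by
      have v1 : i.val = i'.val ∨ i.val = j'.val := by
        rcases h1 with h | h
        · left; rw [h]
        · right; rw [h]
      have v2 : j.val = i'.val ∨ j.val = j'.val := by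
        rcases h2 with h | h
        · left; rw [h]
        · right; rw [h]
      have v3 : i'.val = i.val ∨ i'.val = j.val := by
        rcases h3 with h | h
        · left; rw [h]
        · right; rw [h]
      have l1 : i.val < j.val := hij
      have l2 : i'.val < j'.val := hij'
      constructor <;> [apply Fin.ext; apply Fin.ext] <;> omega
    obtain ⟨hi, hj⟩ := hii
    subst hi; subst hj
    have hv : v = v' := by
      have := congrFun hrr i
      rwa [Pi.add_apply, Pi.add_apply, single_same, single_same,
        single_ne _ (ne_of_lt hij), single_ne _ (ne_of_lt hij'), add_zero, add_zero] at this
    have hw : w = w' := by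
      have := congrFun hrr j
      rwa [Pi.add_apply, Pi.add_apply, single_same, single_same,
        single_ne _ (ne_of_gt hij), single_ne _ (ne_of_gt hij'), zero_add, zero_add] at this
    rw [hv, hw]
  -- image equality
  · ext x
    simp only [Finset.mem_image, Finset.mem_filter]
    constructor
    · rintro ⟨hx, hw2⟩
      obtain ⟨a, b, hab, hsupp⟩ := Finset.card_eq_two.mp hw2
      have hmem : ∀ l : Fin n, l ∈ Finset.univ.filter (fun l => x l ≠ 0) ↔ x l ≠ 0 := by
        intro l; simp
      have hxa : x a ≠ 0 := by rw [← hmem a, hsupp]; simp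
      have hxb : x b ≠ 0 := by rw [← hmem b, hsupp]; simp
      have hba := (mem_ballF.mp hx).1
      rcases lt_or_gt_of_ne hab with hlt | hgt
      · refine ⟨((a, b), x a, x b), ?_, (eq_pair_of_supp hab hsupp).symm⟩
        simp only [hP, hIdef, Finset.mem_product, Finset.mem_filter, Finset.mem_univ, true_and,
          Finset.mem_erase]
        exact ⟨hlt, ⟨hxa, hba a⟩, hxb, hba b⟩
      · have hsupp' : Finset.univ.filter (fun l => x l ≠ 0) = {b, a} := by
          rw [hsupp, Finset.pair_comm]
        refine ⟨((b, a), x b, x a), ?_, (eq_pair_of_supp (Ne.symm hab) hsupp').symm⟩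
        simp only [hP, hIdef, Finset.mem_product, Finset.mem_filter, Finset.mem_univ, true_and,
          Finset.mem_erase]
        exact ⟨hgt, ⟨hxb, hba b⟩, hxa, hba a⟩
    · rintro ⟨⟨⟨i, j⟩, v, w⟩, hr, rfl⟩
      simp only [hP, hIdef, Finset.mem_product, Finset.mem_filter, Finset.mem_univ, true_and,
        Finset.mem_erase] at hr
      obtain ⟨hij, hv, hw⟩ := hr
      refine ⟨pair_mem_ballF hkm hkp (ne_of_lt hij) (Finset.mem_erase.mpr hv)
        (Finset.mem_erase.mpr hw), wt_pair (ne_of_lt hij) v w hv.1 hw.1⟩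

lemma zero_mem_ballF (hkm : 0 ≤ km) (hkp : 0 ≤ kp) : (0 : Fin n → ℤ) ∈ ballF n kp km := by
  rw [mem_ballF]
  refine ⟨fun i => ?_, by simp [wt_eq_zero_iff.mpr rfl]⟩
  simp [Finset.mem_Icc]; omega

set_option maxHeartbeats 1000000 in
lemma sum_ballF (hkm : 0 ≤ km) (hkp : 0 ≤ kp) (F : (Fin n → ℤ) → ℤ) (hF0 : F 0 = 1)
    (hmul : ∀ (i j : Fin n) (v w : ℤ), i ≠ j →
      F (Pi.single i v + Pi.single j w) = F (Pi.single i v) * F (Pi.single j w)) :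
    2 * ∑ x ∈ ballF n kp km, F x
      = 2 + 2 * (∑ i, ∑ v ∈ (Finset.Icc (-km) kp).erase 0, F (Pi.single i v))
        + ((∑ i, ∑ v ∈ (Finset.Icc (-km) kp).erase 0, F (Pi.single i v))^2
           - ∑ i, (∑ v ∈ (Finset.Icc (-km) kp).erase 0, F (Pi.single i v))^2) := by
  have e1 := Finset.sum_filter_add_sum_filter_not (ballF n kp km) (fun x => wt x = 0) F
  have e2 := Finset.sum_filter_add_sum_filter_not
    ((ballF n kp km).filter (fun x => ¬ wt x = 0)) (fun x => wt x = 1) F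
  have e3 : ((ballF n kp km).filter (fun x => ¬ wt x = 0)).filter (fun x => wt x = 1)
      = (ballF n kp km).filter (fun x => wt x = 1) := by
    ext x
    simp only [Finset.mem_filter, mem_ballF]
    constructor
    · rintro ⟨⟨⟨h1, h2⟩, h3⟩, h4⟩; exact ⟨⟨h1, h2⟩, h4⟩
    · rintro ⟨⟨h1, h2⟩, h4⟩; exact ⟨⟨⟨h1, h2⟩, by omega⟩, h4⟩
  have e4 : ((ballF n kp km).filter (fun x => ¬ wt x = 0)).filter (fun x => ¬ wt x = 1)
      = (ballF n kp km).filter (fun x => wt x = 2) := by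
    ext x
    simp only [Finset.mem_filter, mem_ballF]
    constructor
    · rintro ⟨⟨⟨h1, h2⟩, h3⟩, h4⟩; exact ⟨⟨h1, h2⟩, by omega⟩
    · rintro ⟨⟨h1, h2⟩, h4⟩; refine ⟨⟨⟨h1, h2⟩, by omega⟩, by omega⟩
  have e0 : (ballF n kp km).filter (fun x => wt x = 0) = {0} := by
    ext x
    simp only [Finset.mem_filter, Finset.mem_singleton]
    constructor
    · rintro ⟨-, h⟩; exact wt_eq_zero_iff.mp h
    · rintro rfl; exact ⟨zero_mem_ballF hkm hkp, wt_eq_zero_iff.mpr rfl⟩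
  rw [e3, e4] at e2
  have s0 : ∑ x ∈ (ballF n kp km).filter (fun x => wt x = 0), F x = 1 := by
    rw [e0, Finset.sum_singleton, hF0]
  have hsum : ∑ x ∈ ballF n kp km, F x
      = 1 + ∑ x ∈ (ballF n kp km).filter (fun x => wt x = 1), F x
        + ∑ x ∈ (ballF n kp km).filter (fun x => wt x = 2), F x := by
    linarith [e1, e2, s0]
  rw [hsum, sum_wt1 hkm hkp F, sum_wt2 hkm hkp F hmul]
  have := sq_sum_split (fun i => ∑ v ∈ (Finset.Icc (-km) kp).erase 0, F (Pi.single i v))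
  rw [mul_add, mul_add, this]
  ring

end

noncomputable def eps : ZMod 2 → ℤ := fun c => if c = 0 then 1 else -1

lemma eps_add : ∀ a b : ZMod 2, eps (a + b) = eps a * eps b := by decide
lemma eps_zero : eps 0 = 1 := by decide
lemma eps_one_add : ∀ c : ZMod 2, eps (1 + c) = - eps c := by decide

lemma Icc_int_top (a b : ℤ) (h : a ≤ b + 1) :
    Finset.Icc a (b + 1) = insert (b + 1) (Finset.Icc a b) := by
  ext v
  simp only [Finset.mem_Icc, Finset.mem_insert]
  omega

lemma sum_eps_block (M : ℕ) : ∀ a : ℤ,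
    ∑ v ∈ Finset.Icc a (a + (2 * (M : ℤ) + 1)), eps (v : ZMod 2) = 0 := by
  induction M with
  | zero =>
    intro a
    have h1 : a + (2 * ((0:ℕ) : ℤ) + 1) = a + 1 := by push_cast; ring
    rw [h1, Icc_int_top a a (by omega), Finset.Icc_self, Finset.sum_insert (by simp),
      Finset.sum_singleton]
    have : ((a + 1 : ℤ) : ZMod 2) = 1 + (a : ZMod 2) := by push_cast; ring
    rw [this, eps_one_add]
    ring
  | succ M ih =>
    intro a
    have h1 : a + (2 * ((M+1:ℕ) : ℤ) + 1) = (a + (2 * (M:ℤ) + 1) + 1) + 1 := by push_cast; ring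
    rw [h1, Icc_int_top a _ (by omega), Finset.sum_insert (by simp),
      Icc_int_top a _ (by omega), Finset.sum_insert (by simp), ih a]
    set b := a + (2 * (M:ℤ) + 1) with hb
    have e1 : ((b + 1 + 1 : ℤ) : ZMod 2) = (b : ZMod 2) := by
      push_cast
      ring_nf
      rw [show (2 : ZMod 2) = 0 from by decide]
      ring
    have e2 : ((b + 1 : ℤ) : ZMod 2) = 1 + (b : ZMod 2) := by push_cast; ring
    rw [e1, e2, eps_one_add]
    ring

lemma card_I {kp km : ℤ} (hkm : 0 ≤ km) (hkp : 0 ≤ kp) :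
    ((((Finset.Icc (-km) kp).erase 0)).card : ℤ) = kp + km := by
  have h0 : (0:ℤ) ∈ Finset.Icc (-km) kp := by simp [Finset.mem_Icc]; omega
  rw [Finset.card_erase_of_mem h0]
  have hc : (((Finset.Icc (-km) kp)).card : ℤ) = kp + 1 - (-km) :=
    Int.card_Icc_of_le _ _ (by omega)
  have h1 : 1 ≤ ((Finset.Icc (-km) kp)).card := Finset.card_pos.mpr ⟨0, h0⟩
  have h2 : (((((Finset.Icc (-km) kp)).card - 1 : ℕ)) : ℤ)
      = (((Finset.Icc (-km) kp)).card : ℤ) - 1 := by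
    push_cast [h1]
    ring
  omega

lemma single_eq_intsmul {n : ℕ} (i : Fin n) (v : ℤ) :
    (Pi.single i v : Fin n → ℤ) = v • (Pi.single i 1 : Fin n → ℤ) := by
  funext l
  rcases eq_or_ne l i with rfl | hl
  · rw [single_same, Pi.smul_apply, single_same, smul_eq_mul, mul_one]
  · rw [single_ne _ hl, Pi.smul_apply, single_ne _ hl, smul_eq_mul, mul_zero]

theorem stmt_13 (n : ℕ) (kp km : ℤ) (hn : 2 ≤ n)
    (hkm : 0 ≤ km) (hkp : km ≤ kp) (hk0 : ¬(kp = 0 ∧ km = 0))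
    (hex : ∃ Λ : AddSubgroup (Fin n → ℤ),
      Tiles (errBall n 2 kp km) (Λ : Set (Fin n → ℤ)))
    (heven : Even ((n.choose 2 : ℤ) * (kp + km) ^ 2 + (n : ℤ) * (kp + km) + 1)) :
    ∃ ℓ : ℤ, 4 * (kp + km) * (n : ℤ) = 4 * ℓ ^ 2 - (kp + km - 3) ^ 2 + 8 := by
  classical
  obtain ⟨Λ, hT⟩ := hex
  have hkp0 : 0 ≤ kp := le_trans hkm hkp
  set k : ℤ := kp + km with hk
  have hk1 : 1 ≤ k := by
    push_neg at hk0
    rcases eq_or_ne kp 0 with h | h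
    · have := hk0 h; omega
    · omega
  -- k is odd
  have hkodd : ∃ j : ℤ, k = 2*j + 1 := by
    rcases Int.even_or_odd k with ⟨c, hc⟩ | ⟨c, hc⟩
    · exfalso
      have hX : (n.choose 2 : ℤ) * k ^ 2 + (n:ℤ) * k + 1
          = 2*(2*(n.choose 2:ℤ)*c^2 + (n:ℤ)*c) + 1 := by rw [hc]; ring
      rw [hX, Int.even_iff] at heven
      omega
    · exact ⟨c, by omega⟩
  obtain ⟨j, hj⟩ := hkodd
  have hj0 : 0 ≤ j := by omega
  -- correspondence of ball descriptions
  have hball : ∀ x : Fin n → ℤ, x ∈ ballF n kp km ↔ x ∈ errBall n 2 kp km := by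
    intro x
    rw [mem_ballF]
    constructor
    · rintro ⟨h1, h2⟩
      exact ⟨fun i => by have := h1 i; rw [Finset.mem_Icc] at this; exact this, h2⟩
    · rintro ⟨h1, h2⟩
      exact ⟨fun i => by rw [Finset.mem_Icc]; exact h1 i, h2⟩
  set π := QuotientAddGroup.mk' Λ with hπ
  -- injectivity of π on the ball
  have hinj : ∀ x ∈ ballF n kp km, ∀ y ∈ ballF n kp km, π x = π y → x = y := by
    intro x hx y hy hxy
    have hsub : x - y ∈ Λ := by
      rw [hπ, QuotientAddGroup.mk'_apply, QuotientAddGroup.mk'_apply,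
        QuotientAddGroup.eq_iff_sub_mem] at hxy
      exact hxy
    obtain ⟨p, -, hup⟩ := hT x
    have h1 : ((x - y, y) : (Fin n → ℤ) × (Fin n → ℤ)) = p :=
      hup _ ⟨hsub, (hball y).mp hy, by ring⟩
    have h2 : ((0, x) : (Fin n → ℤ) × (Fin n → ℤ)) = p :=
      hup _ ⟨Λ.zero_mem, (hball x).mp hx, by ring⟩
    exact (congrArg Prod.snd (h1.trans h2.symm)).symm
  -- surjectivity of π from the ball
  have hsurj : ∀ g : (Fin n → ℤ) ⧸ Λ, ∃ x ∈ ballF n kp km, π x = g := by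
    intro g
    obtain ⟨z, rfl⟩ := QuotientAddGroup.mk'_surjective Λ g
    obtain ⟨p, ⟨hp1, hp2, hp3⟩, -⟩ := hT z
    refine ⟨p.2, (hball p.2).mpr hp2, ?_⟩
    rw [hπ, QuotientAddGroup.mk'_apply, QuotientAddGroup.mk'_apply,
      QuotientAddGroup.eq_iff_sub_mem]
    have he : p.2 - z = -p.1 := by rw [hp3]; abel
    rw [he]
    exact neg_mem hp1
  haveI hfin : Finite ((Fin n → ℤ) ⧸ Λ) := by
    apply Finite.of_surjective (fun x : {x // x ∈ ballF n kp km} => π x.val)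
    intro g
    obtain ⟨x, hx, he⟩ := hsurj g
    exact ⟨⟨x, hx⟩, he⟩
  haveI : Fintype ((Fin n → ℤ) ⧸ Λ) := Fintype.ofFinite _
  have hbij : Function.Bijective (fun x : {x // x ∈ ballF n kp km} => π x.val) := by
    constructor
    · rintro ⟨x, hx⟩ ⟨y, hy⟩ hxy
      exact Subtype.ext (hinj x hx y hy hxy)
    · intro g
      obtain ⟨x, hx, he⟩ := hsurj g
      exact ⟨⟨x, hx⟩, he⟩
  have hcard : Fintype.card ((Fin n → ℤ) ⧸ Λ) = (ballF n kp km).card := by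
    rw [← Fintype.card_coe (ballF n kp km)]
    exact (Fintype.card_of_bijective hbij).symm
  -- cardinality of the ball
  have hNcard := sum_ballF (n := n) hkm hkp0 (fun _ => (1:ℤ)) rfl (fun i j v w _ => by ring)
  have hIcc : ((((Finset.Icc (-km) kp).erase 0)).card : ℤ) = k := card_I hkm hkp0
  simp only [Finset.sum_const, nsmul_eq_mul, mul_one, Finset.card_univ, Fintype.card_fin,
    hIcc] at hNcard
  -- hNcard : 2 * (ballF.card) = 2 + 2*(n*k) + ((n*k)^2 - n*k^2)
  have h2c : 2 * (n.choose 2 : ℤ) = (n:ℤ) * ((n:ℤ) - 1) := by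
    have hnat : 2 * (n.choose 2) = n * (n-1) := by
      rw [Nat.choose_two_right]
      have hdvd : 2 ∣ n * (n-1) := by
        have he := Nat.even_mul_succ_self (n - 1)
        have hn1 : n - 1 + 1 = n := by omega
        rw [hn1] at he
        rw [Nat.mul_comm]
        exact he.two_dvd
      omega
    have := congrArg (fun t : ℕ => (t : ℤ)) hnat
    push_cast at this
    rw [this]
    have h1n : (1:ℤ) ≤ (n:ℤ) := by exact_mod_cast Nat.one_le_of_lt hn
    have : ((n - 1 : ℕ) : ℤ) = (n:ℤ) - 1 := by
      have : 1 ≤ n := by omega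
      push_cast [this]
      ring
    rw [this]
  have hNval : (((ballF n kp km).card) : ℤ) = (n.choose 2 : ℤ) * k^2 + (n:ℤ)*k + 1 := by
    have hid : 2 * ((n.choose 2 : ℤ) * k^2 + (n:ℤ)*k + 1)
        = 2 + 2*((n:ℤ)*k) + (((n:ℤ)*k)^2 - (n:ℤ)*k^2) := by
      linear_combination (k^2) * h2c
    linarith [hNcard, hid]
  -- even cardinality of the quotient
  have hEvenCard : 2 ∣ Fintype.card ((Fin n → ℤ) ⧸ Λ) := by
    rw [hcard]
    have hEZ : Even (((ballF n kp km).card) : ℤ) := by rw [hNval]; exact heven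
    have : Even ((ballF n kp km).card) := by exact_mod_cast hEZ
    exact this.two_dvd
  obtain ⟨χQ, x₀, hx₀⟩ := exists_hom_to_zmod2 _ hEvenCard
  -- the character sum over the quotient vanishes
  have hSQ : ∑ g : (Fin n → ℤ) ⧸ Λ, eps (χQ g) = 0 := by
    have hre : ∑ g : (Fin n → ℤ) ⧸ Λ, eps (χQ g)
        = ∑ g : (Fin n → ℤ) ⧸ Λ, eps (χQ (x₀ + g)) :=
      Fintype.sum_equiv (Equiv.addLeft x₀).symm _ _ (fun g => by simp)
    have hre2 : ∀ g : (Fin n → ℤ) ⧸ Λ, eps (χQ (x₀ + g)) = - eps (χQ g) := by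
      intro g
      rw [map_add, hx₀, eps_one_add]
    rw [Finset.sum_congr rfl (fun g _ => hre2 g)] at hre
    rw [Finset.sum_neg_distrib] at hre
    linarith [hre]
  -- transfer to the ball
  have hSB : ∑ x ∈ ballF n kp km, eps (χQ (π x)) = 0 := by
    rw [← hSQ]
    apply Finset.sum_bij (i := fun x _ => π x)
    · intro a ha; exact Finset.mem_univ _
    · intro a ha b hb hab; exact hinj a ha b hb hab
    · intro g hg
      obtain ⟨x, hx, he⟩ := hsurj g
      exact ⟨x, hx, he⟩
    · intro a ha; rfl
  -- apply the master identity with the character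
  set F : (Fin n → ℤ) → ℤ := fun x => eps (χQ (π x)) with hFdef
  have hF0 : F 0 = 1 := by
    rw [hFdef]
    simp only [map_zero]
    exact eps_zero
  have hmulF : ∀ (i j : Fin n) (v w : ℤ), i ≠ j →
      F (Pi.single i v + Pi.single j w) = F (Pi.single i v) * F (Pi.single j w) := by
    intro i j v w _
    rw [hFdef]
    simp only [map_add]
    exact eps_add _ _
  have hkey := sum_ballF (n := n) hkm hkp0 F hF0 hmulF
  rw [show (∑ x ∈ ballF n kp km, F x) = 0 from hSB] at hkey
  -- evaluate the inner sums
  set G : Fin n → ℤ := fun i => ∑ v ∈ (Finset.Icc (-km) kp).erase 0, F (Pi.single i v)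
    with hGdef
  have hGi : ∀ i : Fin n, G i = if χQ (π (Pi.single i 1)) = 1 then -1 else k := by
    intro i
    have hχ : ∀ v : ℤ, χQ (π (Pi.single i v)) = (v : ZMod 2) * χQ (π (Pi.single i 1)) := by
      intro v
      rw [single_eq_intsmul i v, map_zsmul, map_zsmul, zsmul_eq_mul]
    rcases zmod2_cases (χQ (π (Pi.single i 1))) with h0 | h1
    · rw [if_neg (by simp [h0])]
      show ∑ v ∈ (Finset.Icc (-km) kp).erase 0, F (Pi.single i v) = k
      have : ∀ v ∈ (Finset.Icc (-km) kp).erase 0, F (Pi.single i v) = 1 := by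
        intro v hv
        rw [hFdef]
        simp only []
        rw [hχ v, h0, mul_zero, eps_zero]
      rw [Finset.sum_congr rfl this, Finset.sum_const, nsmul_eq_mul, mul_one,
        card_I hkm hkp0]
    · rw [if_pos h1]
      show ∑ v ∈ (Finset.Icc (-km) kp).erase 0, F (Pi.single i v) = -1
      have hFe : ∀ v ∈ (Finset.Icc (-km) kp).erase 0, F (Pi.single i v) = eps (v : ZMod 2) := by
        intro v hv
        rw [hFdef]
        simp only []
        rw [hχ v, h1, mul_one]
      rw [Finset.sum_congr rfl hFe]
      have h0m : (0:ℤ) ∈ Finset.Icc (-km) kp := by simp [Finset.mem_Icc]; omega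
      rw [Finset.sum_erase_eq_sub h0m]
      have hend : kp = -km + (2 * ((j.toNat : ℤ)) + 1) := by
        have : (j.toNat : ℤ) = j := Int.toNat_of_nonneg hj0
        omega
      rw [show Finset.Icc (-km) kp = Finset.Icc (-km) (-km + (2 * ((j.toNat : ℤ)) + 1)) from
        by rw [← hend]]
      rw [sum_eps_block j.toNat (-km)]
      norm_num [eps_zero]
  -- counting
  set s : Finset (Fin n) := Finset.univ.filter (fun i => χQ (π (Pi.single i 1)) = 1) with hs
  have hms : s.card + (Finset.univ.filter (fun i => ¬ χQ (π (Pi.single i 1)) = 1)).card = n := by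
    rw [hs, Finset.card_filter_add_card_filter_not, Finset.card_univ, Fintype.card_fin]
  set m1 : ℕ := s.card with hm1
  set m2 : ℕ := (Finset.univ.filter (fun i => ¬ χQ (π (Pi.single i 1)) = 1)).card with hm2
  have hA : (∑ i, G i) = -(m1:ℤ) + (m2:ℤ) * k := by
    rw [← Finset.sum_filter_add_sum_filter_not Finset.univ
      (fun i => χQ (π (Pi.single i 1)) = 1) G]
    have e1 : ∀ i ∈ Finset.univ.filter (fun i => χQ (π (Pi.single i 1)) = 1), G i = -1 := by
      intro i hi
      rw [hGi i, if_pos (by simpa using hi)]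
    have e2 : ∀ i ∈ Finset.univ.filter (fun i => ¬ χQ (π (Pi.single i 1)) = 1), G i = k := by
      intro i hi
      rw [hGi i, if_neg (by simpa using hi)]
    rw [Finset.sum_congr rfl e1, Finset.sum_congr rfl e2, Finset.sum_const, Finset.sum_const,
      nsmul_eq_mul, nsmul_eq_mul]
    rw [← hs, ← hm1, ← hm2]
    ring
  have hQs : (∑ i, (G i)^2) = (m1:ℤ) + (m2:ℤ) * k^2 := by
    rw [← Finset.sum_filter_add_sum_filter_not Finset.univ
      (fun i => χQ (π (Pi.single i 1)) = 1) (fun i => (G i)^2)]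
    have e1 : ∀ i ∈ Finset.univ.filter (fun i => χQ (π (Pi.single i 1)) = 1), (G i)^2 = 1 := by
      intro i hi
      rw [hGi i, if_pos (by simpa using hi)]
      ring
    have e2 : ∀ i ∈ Finset.univ.filter (fun i => ¬ χQ (π (Pi.single i 1)) = 1),
        (G i)^2 = k^2 := by
      intro i hi
      rw [hGi i, if_neg (by simpa using hi)]
    rw [Finset.sum_congr rfl e1, Finset.sum_congr rfl e2, Finset.sum_const, Finset.sum_const,
      nsmul_eq_mul, nsmul_eq_mul]
    rw [← hs, ← hm1, ← hm2]
    ring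
  have hmn : (m1:ℤ) + (m2:ℤ) = (n:ℤ) := by exact_mod_cast hms
  refine ⟨(∑ i, G i) + 1 - j, ?_⟩
  linear_combination 4*hkey + (4*(k-1))*hA + (-4)*hQs + (-4*k)*hmn
    + (-(4*(∑ i, G i) + 5 - 2*j - k))*hj
end

section
/- Let G be a finite abelian group, n ≥ 1, and let s : Fin n → G be an injective map such that the partial splitting condition G ≥ {1} ◇₂ S holds for S = {s₁,…,sₙ}: the sums ∑ᵢ eᵢ·sᵢ over all e ∈ {0,1}ⁿ with 1 ≤ wt(e) ≤ 2 are pairwise distinct and nonzero. Let a, b, c, d ∈ S ∪ {0} with a ≠ b, c ≠ d, (a,b) ≠ (c,d), and a − b = c − d. Then a = d or b = c. Moreover, if additionally a = d = 0, then b = c. -/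
open Finset
open scoped Classical

/-- The partial splitting condition `G ≥ M ◇ₜ S` : the sums `∑ i, e i • s i`, over all
`e` with entries in `M ∪ {0}` and `1 ≤ wt e ≤ t`, are pairwise distinct and nonzero. -/
def PartialSplits {G : Type*} [AddCommGroup G] (M : Set ℤ) (t : ℕ) {n : ℕ}
    (s : Fin n → G) : Prop :=
  (∀ e : Fin n → ℤ, (∀ i, e i ∈ M ∨ e i = 0) → 1 ≤ wt e → wt e ≤ t →
      ∑ i, e i • s i ≠ 0) ∧
  ∀ e f : Fin n → ℤ, (∀ i, e i ∈ M ∨ e i = 0) → (∀ i, f i ∈ M ∨ f i = 0) →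
    1 ≤ wt e → wt e ≤ t → 1 ≤ wt f → wt f ≤ t →
    ∑ i, e i • s i = ∑ i, f i • s i → e = f

noncomputable def Ev {n : ℕ} {G : Type} [AddCommGroup G] (s : Fin n → G) (x y : G) : Fin n → ℤ :=
  fun i => (if s i = x then 1 else 0) + (if s i = y then 1 else 0)

section
variable {n : ℕ} {G : Type} [AddCommGroup G] (s : Fin n → G)

lemma Ev_mem (x y : G) (hxy : x ≠ y) : ∀ i, Ev s x y i ∈ ({1} : Set ℤ) ∨ Ev s x y i = 0 := by
  intro i
  simp only [Set.mem_singleton_iff, Ev]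
  by_cases h1 : s i = x
  · have h2 : ¬ s i = y := fun h => hxy (h1 ▸ h ▸ rfl)
    simp [h1, h2]
    exact Or.inl hxy
  · by_cases h2 : s i = y
    · simp [h1, h2]
      exact Or.inl (fun h => hxy h.symm)
    · simp [h1, h2]

lemma Ev_ne (x y : G) (i : Fin n) (h : s i = x ∨ s i = y) : Ev s x y i ≠ 0 := by
  unfold Ev
  rcases h with h | h <;> simp only [h, if_pos rfl] <;> split_ifs <;> omega

lemma Ev_eq_zero (x y : G) (i : Fin n) (h1 : s i ≠ x) (h2 : s i ≠ y) : Ev s x y i = 0 := by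
  simp [Ev, h1, h2]

lemma filter_eq_singleton (hs : Function.Injective s) (k : Fin n) :
    univ.filter (fun i => s i = s k) = {k} := by
  ext i; simp only [mem_filter, mem_univ, true_and, mem_singleton]
  exact ⟨fun h => hs h, fun h => h ▸ rfl⟩

lemma Ev_wt (hs : Function.Injective s) (hs0 : ∀ i, s i ≠ 0) (x y : G) (hxy : x ≠ y)
    (hx : x ∈ Set.range s ∪ {0}) (hy : y ∈ Set.range s ∪ {0}) :
    1 ≤ wt (Ev s x y) ∧ wt (Ev s x y) ≤ 2 := by
  have hsupp : univ.filter (fun i => Ev s x y i ≠ 0)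
      = univ.filter (fun i => s i = x) ∪ univ.filter (fun i => s i = y) := by
    ext i
    simp only [mem_filter, mem_univ, true_and, mem_union]
    constructor
    · intro h
      by_contra hcon
      push_neg at hcon
      exact h (Ev_eq_zero s x y i hcon.1 hcon.2)
    · exact Ev_ne s x y i
  have cardle : ∀ z : G, (univ.filter (fun i => s i = z)).card ≤ 1 := by
    intro z
    rcases em (∃ k, s k = z) with ⟨k, hk⟩ | hnk
    · rw [← hk, filter_eq_singleton s hs]; simp
    · have : univ.filter (fun i => s i = z) = ∅ := by
        ext i; simp only [mem_filter, mem_univ, true_and, notMem_empty, iff_false]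
        exact fun h => hnk ⟨i, h⟩
      simp [this]
  constructor
  · -- at least one of x,y is in range s
    have : ∃ i, s i = x ∨ s i = y := by
      rcases hx with ⟨i, hi⟩ | hx0
      · exact ⟨i, Or.inl hi⟩
      · rcases hy with ⟨i, hi⟩ | hy0
        · exact ⟨i, Or.inr hi⟩
        · exact absurd (hx0.trans hy0.symm) hxy
    obtain ⟨i, hi⟩ := this
    have : i ∈ univ.filter (fun i => Ev s x y i ≠ 0) := by
      simp only [mem_filter, mem_univ, true_and]
      exact Ev_ne s x y i hi
    exact Finset.card_pos.mpr ⟨i, this⟩ 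
  · unfold wt
    rw [hsupp]
    calc _ ≤ (univ.filter (fun i => s i = x)).card + (univ.filter (fun i => s i = y)).card :=
          card_union_le _ _
      _ ≤ 1 + 1 := Nat.add_le_add (cardle x) (cardle y)

lemma Ev_sum (hs : Function.Injective s) (hs0 : ∀ i, s i ≠ 0) (x y : G)
    (hx : x ∈ Set.range s ∪ {0}) (hy : y ∈ Set.range s ∪ {0}) :
    ∑ i, Ev s x y i • s i = x + y := by
  have key : ∀ z : G, z ∈ Set.range s ∪ {0} →
      ∑ i, (if s i = z then (1:ℤ) else 0) • s i = z := by
    intro z hz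
    have hterm : ∀ i, (if s i = z then (1:ℤ) else 0) • s i = if s i = z then s i else 0 := by
      intro i; by_cases h : s i = z <;> simp [h]
    rw [Fintype.sum_congr _ _ hterm]
    rcases hz with ⟨k, hk⟩ | hz0
    · rw [← Finset.sum_filter, ← hk, filter_eq_singleton s hs, Finset.sum_singleton]
    · rw [hz0]
      apply Finset.sum_eq_zero
      intro i _
      simp [hs0 i]
  have hterm2 : ∀ i, Ev s x y i • s i
      = (if s i = x then (1:ℤ) else 0) • s i + (if s i = y then (1:ℤ) else 0) • s i := by
    intro i; unfold Ev; rw [add_smul]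
  rw [Fintype.sum_congr _ _ hterm2, Finset.sum_add_distrib, key x hx, key y hy]
end

section
variable {n : ℕ} {G : Type} [AddCommGroup G] {s : Fin n → G}

lemma Ev_mem_of_eq (hs0 : ∀ i, s i ≠ 0)
    {x y u v : G} (hx : x ∈ Set.range s ∪ {0})
    (hu : u ∈ Set.range s ∪ {0}) (hv : v ∈ Set.range s ∪ {0}) (huv : u ≠ v)
    (hE : Ev s x y = Ev s u v) : x = u ∨ x = v := by
  rcases hx with ⟨i, hi⟩ | hx0
  · -- x = s i : the i-th entry of Ev s u v is nonzero
    have h1 : Ev s u v i ≠ 0 := hE ▸ Ev_ne s x y i (Or.inl hi)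
    by_contra hcon
    push_neg at hcon
    exact h1 (Ev_eq_zero s u v i (fun h => hcon.1 (hi ▸ h.symm ▸ rfl))
      (fun h => hcon.2 (hi ▸ h.symm ▸ rfl)))
  · -- x = 0 : suppose u ≠ 0 and v ≠ 0
    subst hx0
    by_contra hcon
    push_neg at hcon
    obtain ⟨hu0, hv0⟩ := hcon
    have hzero : ∀ j : Fin n, Ev s 0 y j ≠ 0 → s j = y := by
      intro j hne
      by_contra h
      exact hne (Ev_eq_zero s 0 y j (hs0 j) h)
    obtain ⟨i, hi⟩ : ∃ i, s i = u := by
      rcases hu with ⟨i, hi⟩ | h0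
      · exact ⟨i, hi⟩
      · exact absurd h0.symm hu0
    obtain ⟨j, hj⟩ : ∃ j, s j = v := by
      rcases hv with ⟨j, hj⟩ | h0
      · exact ⟨j, hj⟩
      · exact absurd h0.symm hv0
    have h1 : Ev s 0 y i ≠ 0 := hE ▸ Ev_ne s u v i (Or.inl hi)
    have h2 : Ev s 0 y j ≠ 0 := hE ▸ Ev_ne s u v j (Or.inr hj)
    have : u = v := by rw [← hi, ← hj, hzero i h1, hzero j h2]
    exact huv this
end


theorem stmt_14 (n : ℕ) (hn : 1 ≤ n)
    (G : Type) [AddCommGroup G] [Fintype G]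
    (s : Fin n → G) (hs : Function.Injective s)
    (hsplit : PartialSplits {1} 2 s)
    (a b c d : G)
    (ha : a ∈ Set.range s ∪ {0}) (hb : b ∈ Set.range s ∪ {0})
    (hc : c ∈ Set.range s ∪ {0}) (hd : d ∈ Set.range s ∪ {0})
    (hab : a ≠ b) (hcd : c ≠ d) (hne : (a, b) ≠ (c, d))
    (heq : a - b = c - d) :
    (a = d ∨ b = c) ∧ (a = 0 → d = 0 → b = c) := by
  obtain ⟨hnz, hinj⟩ := hsplit
  have hs0 : ∀ i, s i ≠ 0 := by
    intro i h0
    set e : Fin n → ℤ := fun j => if j = i then 1 else 0 with he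
    have hsum : ∑ j, e j • s j = s i := by
      have : ∀ j, e j • s j = if j = i then s j else 0 := by
        intro j; by_cases h : j = i <;> simp [he, h]
      rw [Fintype.sum_congr _ _ this, Finset.sum_ite_eq' univ i s, if_pos (mem_univ i)]
    have hwt : wt e = 1 := by
      unfold wt
      have : (univ.filter fun j => e j ≠ 0) = {i} := by
        ext j; by_cases h : j = i <;> simp [he, h]
      simp [this]
    exact hnz e (fun j => by by_cases h : j = i <;> simp [he, h]) (by omega) (by omega)
      (hsum.trans h0)
  constructor
  · by_cases had : a = d
    · exact Or.inl had
    by_cases hbc : b = c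
    · exact Or.inr hbc
    exfalso
    have hsum : a + d = c + b := sub_eq_sub_iff_add_eq_add.mp heq
    have wad := Ev_wt s hs hs0 a d had ha hd
    have wbc := Ev_wt s hs hs0 b c hbc hb hc
    have hE : Ev s a d = Ev s b c := by
      apply hinj (Ev s a d) (Ev s b c) (Ev_mem s a d had) (Ev_mem s b c hbc)
        wad.1 wad.2 wbc.1 wbc.2
      rw [Ev_sum s hs hs0 a d ha hd, Ev_sum s hs hs0 b c hb hc, hsum, add_comm]
    have h1 := Ev_mem_of_eq hs0 ha hb hc hbc hE
    have hE2 : Ev s d a = Ev s b c := by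
      rw [← hE]; funext i; unfold Ev; ring
    have h2 := Ev_mem_of_eq hs0 hd hb hc hbc hE2
    rcases h1 with h1 | h1
    · exact hab h1
    rcases h2 with h2 | h2
    · exact hne (by rw [h1, h2])
    · exact had (h1.trans h2.symm)
  · intro ha0 hd0
    by_contra hbc
    rw [ha0, hd0, zero_sub, sub_zero] at heq
    have hsum0 : b + c = 0 := by rw [← heq, add_neg_cancel]
    have wbc := Ev_wt s hs hs0 b c hbc hb hc
    exact hnz (Ev s b c) (Ev_mem s b c hbc) wbc.1 wbc.2
      ((Ev_sum s hs hs0 b c hb hc).trans hsum0)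
end

section
/- Let G be a finite abelian group, n ≥ 1, and let s : Fin n → G be an injective map such that the partial splitting condition G ≥ {1} ◇₂ S holds for S = {s₁,…,sₙ}: the sums ∑ᵢ eᵢ·sᵢ over all e ∈ {0,1}ⁿ with 1 ≤ wt(e) ≤ 2 are pairwise distinct and nonzero. Then |G| + m₂(G) ≥ n² − n + 1, where m₂(G) is the number of elements x ∈ G with x ≠ 0 and 2x = 0. -/
open Finset

open Classical in
/-- The collision-resolving map. -/
noncomputable def psi {n : ℕ} {G : Type} [AddCommGroup G] (s : Fin n → G)
    (hs : Function.Injective s) :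
    ({p : Fin n × Fin n // p.1 ≠ p.2} ⊕ Unit) → G ⊕ {x : G // x ≠ 0 ∧ 2 • x = 0} :=
  fun x =>
    Sum.elim
      (fun p =>
        if h2 : 2 • (s p.1.1 - s p.1.2) = 0 then
          if p.1.1 < p.1.2 then Sum.inl (s p.1.1 - s p.1.2)
          else Sum.inr ⟨s p.1.1 - s p.1.2,
            sub_ne_zero_of_ne (fun h => p.2 (hs h)), h2⟩
        else if ∃ k, s k = (s p.1.1 - s p.1.2) + s p.1.1 ∧ p.1.2 < k then
          Sum.inl (s p.1.1)
        else if ∃ k, s k = (s p.1.1 - s p.1.2) + s p.1.1 then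
          Sum.inl (-(s p.1.1))
        else Sum.inl (s p.1.1 - s p.1.2))
      (fun _ => Sum.inl 0) x

theorem stmt_16 (n : ℕ) (hn : 1 ≤ n)
    (G : Type) [AddCommGroup G] [Fintype G]
    (s : Fin n → G) (hs : Function.Injective s)
    (hsplit : PartialSplits {1} 2 s) :
    n ^ 2 - n + 1 ≤ Fintype.card G + {x : G | x ≠ 0 ∧ 2 • x = 0}.ncard := by
  classical
  obtain ⟨hnz, huniq⟩ := hsplit
  -- weight-1 indicator lemmas
  have hwt1 : ∀ i : Fin n, wt (fun k => if k = i then (1:ℤ) else 0) = 1 := by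
    intro i
    have h : (univ.filter fun k => ((if k = i then (1:ℤ) else 0) ≠ 0)) = {i} := by
      ext k
      simp only [Finset.mem_filter, Finset.mem_univ, true_and, Finset.mem_singleton]
      by_cases h : k = i <;> simp [h]
    simp only [wt, h, Finset.card_singleton]
  have hsum1 : ∀ i, ∑ k, (if k = i then (1:ℤ) else 0) • s k = s i := by
    intro i
    rw [Finset.sum_eq_single i]
    · simp
    · intro b _ hb; simp [hb]
    · intro h; exact absurd (Finset.mem_univ i) h
  have hmem1 : ∀ i k : Fin n, (if k = i then (1:ℤ) else 0) ∈ ({1} : Set ℤ) ∨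
      (if k = i then (1:ℤ) else 0) = 0 := by
    intro i k; by_cases h : k = i <;> simp [h]
  have hL1 : ∀ i, s i ≠ 0 := by
    intro i h
    exact hnz _ (hmem1 i) (hwt1 i).ge (by rw [hwt1 i]; norm_num)
      (by rw [hsum1 i]; exact h)
  -- weight-2 indicator lemmas
  have hwt2 : ∀ i j : Fin n, i ≠ j →
      wt (fun k => (if k = i then (1:ℤ) else 0) + (if k = j then 1 else 0)) = 2 := by
    intro i j hij
    have h : (univ.filter fun k =>
        (((if k = i then (1:ℤ) else 0) + (if k = j then 1 else 0)) ≠ 0)) = {i, j} := by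
      ext k
      simp only [Finset.mem_filter, Finset.mem_univ, true_and, Finset.mem_insert,
        Finset.mem_singleton]
      by_cases h1 : k = i <;> by_cases h2 : k = j <;>
        simp [h1, h2, hij, Ne.symm hij]
    simp only [wt, h]
    exact Finset.card_pair hij
  have hsum2 : ∀ i j : Fin n,
      ∑ k, ((if k = i then (1:ℤ) else 0) + (if k = j then 1 else 0)) • s k = s i + s j := by
    intro i j
    simp only [add_smul]
    rw [Finset.sum_add_distrib, hsum1, hsum1]
  have hmem2 : ∀ i j : Fin n, i ≠ j → ∀ k,
      ((if k = i then (1:ℤ) else 0) + (if k = j then 1 else 0)) ∈ ({1} : Set ℤ) ∨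
      ((if k = i then (1:ℤ) else 0) + (if k = j then 1 else 0)) = 0 := by
    intro i j hij k
    by_cases h1 : k = i
    · by_cases h2 : k = j
      · exact absurd (h1.symm.trans h2) hij
      · left; simp [h1, h2, hij]
    · by_cases h2 : k = j
      · left; simp [h1, h2, Ne.symm hij]
      · right; simp [h1, h2]
  have hL2 : ∀ i j : Fin n, i ≠ j → s i + s j ≠ 0 := by
    intro i j hij h
    exact hnz _ (hmem2 i j hij) (by rw [hwt2 i j hij]; norm_num)
      (hwt2 i j hij).le (by rw [hsum2 i j]; exact h)
  have hL3 : ∀ i j m : Fin n, i ≠ j → s i + s j ≠ s m := by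
    intro i j m hij h
    have he := huniq _ _ (hmem2 i j hij) (hmem1 m)
      (by rw [hwt2 i j hij]; norm_num) (hwt2 i j hij).le
      (hwt1 m).ge (by rw [hwt1 m]; norm_num)
      (by rw [hsum2, hsum1]; exact h)
    have hw := congrArg wt he
    rw [hwt2 i j hij, hwt1 m] at hw
    norm_num at hw
  have hL4 : ∀ i j k l : Fin n, i ≠ j → k ≠ l → s i + s j = s k + s l →
      (i = k ∧ j = l) ∨ (i = l ∧ j = k) := by
    intro i j k l hij hkl h
    have he := huniq _ _ (hmem2 i j hij) (hmem2 k l hkl)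
      (by rw [hwt2 i j hij]; norm_num) (hwt2 i j hij).le
      (by rw [hwt2 k l hkl]; norm_num) (hwt2 k l hkl).le
      (by rw [hsum2, hsum2]; exact h)
    have hi := congrFun he i
    have hj := congrFun he j
    rw [if_pos rfl, if_neg hij] at hi
    rw [if_pos rfl, if_neg (Ne.symm hij)] at hj
    by_cases hik : i = k
    · by_cases hjl : j = l
      · exact Or.inl ⟨hik, hjl⟩
      · exfalso
        have hjk : j ≠ k := fun h' => hij (h'.trans hik.symm).symm
        rw [if_neg hjk, if_neg hjl] at hj
        norm_num at hj
    · rw [if_neg hik] at hi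
      by_cases hil : i = l
      · by_cases hjk : j = k
        · exact Or.inr ⟨hil, hjk⟩
        · exfalso
          have hjl : j ≠ l := fun h' => hij (h'.trans hil.symm).symm
          rw [if_neg hjk, if_neg hjl] at hj
          norm_num at hj
      · exfalso
        rw [if_neg hil] at hi
        norm_num at hi
  -- derived lemmas
  have hTwo : ∀ i j : Fin n, 2 • (s i - s j) = 0 → s i + s i = s j + s j := by
    intro i j h
    rwa [smul_sub, two_smul, two_smul, sub_eq_zero] at h
  have hCen3 : ∀ i j m : Fin n, s m = (s i - s j) + s i → s m + s j = s i + s i := by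
    intro i j m hm
    rw [hm]; abel
  have hPred_ne : ∀ i j m : Fin n, ¬ (2 • (s i - s j) = 0) →
      s m = (s i - s j) + s i → m ≠ j := by
    intro i j m hc hm hmj
    subst hmj
    apply hc
    have h2 : s m + s m = s i + s i := by
      nth_rewrite 1 [hm]; abel
    rw [smul_sub, two_smul, two_smul, h2, sub_self]
  have hFL : ∀ i j k l : Fin n, i ≠ j → k ≠ l → s i - s j = s k - s l →
      (i = k ∧ j = l) ∨ i = l ∨ j = k := by
    intro i j k l hij hkl h
    by_cases hil : i = l
    · exact Or.inr (Or.inl hil)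
    by_cases hjk : j = k
    · exact Or.inr (Or.inr hjk)
    have h' : s i + s l = s k + s j := sub_eq_sub_iff_add_eq_add.mp h
    rcases hL4 i l k j hil (Ne.symm hjk) h' with ⟨h1, h2⟩ | ⟨h1, h2⟩
    · exact Or.inl ⟨h1, h2.symm⟩
    · exact absurd h1 hij
  have hSwap : ∀ i j k l : Fin n, i ≠ j → k ≠ l → 2 • (s i - s j) = 0 →
      s i - s j = s k - s l → (i = k ∧ j = l) ∨ (i = l ∧ j = k) := by
    intro i j k l hij hkl c1 h
    have hii := hTwo i j c1
    rcases hFL i j k l hij hkl h with ⟨h1, h2⟩ | hil | hjk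
    · exact Or.inl ⟨h1, h2⟩
    · have h' : s i + s l = s k + s j := sub_eq_sub_iff_add_eq_add.mp h
      rw [← hil, hii] at h'
      have : s j = s k := add_right_cancel h'
      exact Or.inr ⟨hil, hs this⟩
    · have h' : s i + s l = s k + s j := sub_eq_sub_iff_add_eq_add.mp h
      rw [← hjk, ← hii] at h'
      have : s l = s i := add_left_cancel h'
      exact Or.inr ⟨(hs this).symm, hjk⟩
  have hCND : ∀ c m jc a b : Fin n, m ≠ jc → s m + s jc = s c + s c → a ≠ b →
      s c = s a - s b → False := by
    intro c m jc a b hmj hcen hab h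
    have hca : s c + s b = s a := by rw [h]; abel
    by_cases hcb : c = b
    · subst hcb
      exact hL3 m jc a hmj (hcen.trans hca)
    · exact hL3 c b a hcb hca
  have hinj : Function.Injective (psi s hs) := by
    rintro (⟨⟨i, j⟩, hij⟩ | u) (⟨⟨k, l⟩, hkl⟩ | v) hab
    · replace hij : i ≠ j := hij
      replace hkl : k ≠ l := hkl
      simp only [psi, Sum.elim_inl] at hab
      simp only [Sum.inl.injEq, Subtype.mk.injEq, Prod.mk.injEq]
      by_cases c1 : 2 • (s i - s j) = 0
      · rw [dif_pos c1] at hab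
        by_cases c2 : 2 • (s k - s l) = 0
        · rw [dif_pos c2] at hab
          by_cases o1 : i < j
          · rw [if_pos o1] at hab
            by_cases o2 : k < l
            · rw [if_pos o2] at hab
              injection hab with hd
              rcases hSwap i j k l hij hkl c1 hd with ⟨h1, h2⟩ | ⟨h1, h2⟩
              · exact ⟨h1, h2⟩
              · exfalso
                rw [h1, h2] at o1
                exact absurd o2 (lt_asymm o1)
            · rw [if_neg o2] at hab
              exact absurd hab (by simp)
          · rw [if_neg o1] at hab
            by_cases o2 : k < l
            · rw [if_pos o2] at hab
              exact absurd hab (by simp)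
            · rw [if_neg o2] at hab
              simp only [Sum.inr.injEq, Subtype.mk.injEq] at hab
              rcases hSwap i j k l hij hkl c1 hab with ⟨h1, h2⟩ | ⟨h1, h2⟩
              · exact ⟨h1, h2⟩
              · exfalso
                have hji : j < i := (hij.lt_or_gt).resolve_left o1
                have hlk : l < k := (hkl.lt_or_gt).resolve_left o2
                rw [h1, h2] at hji
                exact absurd hji (lt_asymm hlk)
        · rw [dif_neg c2] at hab
          by_cases q2 : ∃ m, s m = (s k - s l) + s k ∧ l < m
          · rw [if_pos q2] at hab
            obtain ⟨m, hm, hlm⟩ := q2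
            by_cases o1 : i < j
            · rw [if_pos o1] at hab
              injection hab with hd
              exact (hCND k m l i j hlm.ne' (hCen3 k l m hm) hij hd.symm).elim
            · rw [if_neg o1] at hab
              exact absurd hab (by simp)
          · rw [if_neg q2] at hab
            by_cases p2 : ∃ m, s m = (s k - s l) + s k
            · rw [if_pos p2] at hab
              obtain ⟨m, hm⟩ := p2
              by_cases o1 : i < j
              · rw [if_pos o1] at hab
                injection hab with hd
                have h5 : s k = s j - s i := by
                  have h6 := congrArg Neg.neg hd
                  rw [neg_sub, neg_neg] at h6
                  exact h6.symm
                exact (hCND k m l j i (hPred_ne k l m c2 hm) (hCen3 k l m hm)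
                  (Ne.symm hij) h5).elim
              · rw [if_neg o1] at hab
                exact absurd hab (by simp)
            · rw [if_neg p2] at hab
              by_cases o1 : i < j
              · rw [if_pos o1] at hab
                injection hab with hd
                rw [hd] at c1
                exact absurd c1 c2
              · rw [if_neg o1] at hab
                exact absurd hab (by simp)
      · rw [dif_neg c1] at hab
        by_cases c2 : 2 • (s k - s l) = 0
        · rw [dif_pos c2] at hab
          by_cases q1 : ∃ m, s m = (s i - s j) + s i ∧ j < m
          · rw [if_pos q1] at hab
            obtain ⟨m, hm, hjm⟩ := q1
            by_cases o2 : k < l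
            · rw [if_pos o2] at hab
              injection hab with hd
              exact (hCND i m j k l hjm.ne' (hCen3 i j m hm) hkl hd).elim
            · rw [if_neg o2] at hab
              exact absurd hab (by simp)
          · rw [if_neg q1] at hab
            by_cases p1 : ∃ m, s m = (s i - s j) + s i
            · rw [if_pos p1] at hab
              obtain ⟨m, hm⟩ := p1
              by_cases o2 : k < l
              · rw [if_pos o2] at hab
                injection hab with hd
                have h5 : s i = s l - s k := by
                  have h6 := congrArg Neg.neg hd
                  rw [neg_neg, neg_sub] at h6
                  exact h6
                exact (hCND i m j l k (hPred_ne i j m c1 hm) (hCen3 i j m hm)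
                  (Ne.symm hkl) h5).elim
              · rw [if_neg o2] at hab
                exact absurd hab (by simp)
            · rw [if_neg p1] at hab
              by_cases o2 : k < l
              · rw [if_pos o2] at hab
                injection hab with hd
                rw [← hd] at c2
                exact absurd c2 c1
              · rw [if_neg o2] at hab
                exact absurd hab (by simp)
        · rw [dif_neg c2] at hab
          by_cases q1 : ∃ m, s m = (s i - s j) + s i ∧ j < m
          · rw [if_pos q1] at hab
            obtain ⟨m1, hm1, hjm1⟩ := q1
            by_cases q2 : ∃ m, s m = (s k - s l) + s k ∧ l < m
            · rw [if_pos q2] at hab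
              obtain ⟨m2, hm2, hlm2⟩ := q2
              injection hab with hd
              have hik := hs hd
              subst hik
              have hc1 : s m1 + s j = s i + s i := hCen3 i j m1 hm1
              have hc2 : s m2 + s l = s i + s i := hCen3 i l m2 hm2
              rcases hL4 m1 j m2 l hjm1.ne' hlm2.ne' (hc1.trans hc2.symm) with
                ⟨h1, h2⟩ | ⟨h1, h2⟩
              · exact ⟨rfl, h2⟩
              · exfalso
                rw [h1] at hjm1
                rw [← h2] at hlm2
                exact absurd hlm2 (lt_asymm hjm1)
            · rw [if_neg q2] at hab
              by_cases p2 : ∃ m, s m = (s k - s l) + s k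
              · rw [if_pos p2] at hab
                obtain ⟨m2, hm2⟩ := p2
                injection hab with hd
                exfalso
                have h0 : s i + s k = 0 := by rw [hd]; abel
                by_cases hik : i = k
                · rw [← hik] at h0
                  exact hL2 m1 j hjm1.ne' ((hCen3 i j m1 hm1).trans h0)
                · exact hL2 i k hik h0
              · rw [if_neg p2] at hab
                injection hab with hd
                exact (hCND i m1 j k l hjm1.ne' (hCen3 i j m1 hm1) hkl hd).elim
          · rw [if_neg q1] at hab
            by_cases p1 : ∃ m, s m = (s i - s j) + s i
            · rw [if_pos p1] at hab
              obtain ⟨m1, hm1⟩ := p1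
              have hm1j : m1 ≠ j := hPred_ne i j m1 c1 hm1
              have hm1lt : m1 < j := by
                rcases hm1j.lt_or_gt with h | h
                · exact h
                · exact absurd ⟨m1, hm1, h⟩ q1
              by_cases q2 : ∃ m, s m = (s k - s l) + s k ∧ l < m
              · rw [if_pos q2] at hab
                obtain ⟨m2, hm2, hlm2⟩ := q2
                injection hab with hd
                exfalso
                have h0 : s i + s k = 0 := by rw [← hd]; abel
                by_cases hik : i = k
                · rw [hik] at h0
                  exact hL2 m2 l hlm2.ne' ((hCen3 k l m2 hm2).trans h0)
                · exact hL2 i k hik h0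
              · rw [if_neg q2] at hab
                by_cases p2 : ∃ m, s m = (s k - s l) + s k
                · rw [if_pos p2] at hab
                  obtain ⟨m2, hm2⟩ := p2
                  have hm2l : m2 ≠ l := hPred_ne k l m2 c2 hm2
                  have hm2lt : m2 < l := by
                    rcases hm2l.lt_or_gt with h | h
                    · exact h
                    · exact absurd ⟨m2, hm2, h⟩ q2
                  injection hab with hd
                  have hik := hs (neg_injective hd)
                  subst hik
                  have hc1 : s m1 + s j = s i + s i := hCen3 i j m1 hm1
                  have hc2 : s m2 + s l = s i + s i := hCen3 i l m2 hm2
                  rcases hL4 m1 j m2 l hm1j hm2l (hc1.trans hc2.symm) with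
                    ⟨h1, h2⟩ | ⟨h1, h2⟩
                  · exact ⟨rfl, h2⟩
                  · exfalso
                    rw [h1] at hm1lt
                    rw [← h2] at hm2lt
                    exact absurd hm2lt (lt_asymm hm1lt)
                · rw [if_neg p2] at hab
                  injection hab with hd
                  have h5 : s i = s l - s k := by
                    have h6 := congrArg Neg.neg hd
                    rw [neg_neg, neg_sub] at h6
                    exact h6
                  exact (hCND i m1 j l k hm1j (hCen3 i j m1 hm1)
                    (Ne.symm hkl) h5).elim
            · rw [if_neg p1] at hab
              by_cases q2 : ∃ m, s m = (s k - s l) + s k ∧ l < m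
              · rw [if_pos q2] at hab
                obtain ⟨m2, hm2, hlm2⟩ := q2
                injection hab with hd
                exact (hCND k m2 l i j hlm2.ne' (hCen3 k l m2 hm2) hij hd.symm).elim
              · rw [if_neg q2] at hab
                by_cases p2 : ∃ m, s m = (s k - s l) + s k
                · rw [if_pos p2] at hab
                  obtain ⟨m2, hm2⟩ := p2
                  injection hab with hd
                  have h5 : s k = s j - s i := by
                    have h6 := congrArg Neg.neg hd
                    rw [neg_sub, neg_neg] at h6
                    exact h6.symm
                  exact (hCND k m2 l j i (hPred_ne k l m2 c2 hm2)
                    (hCen3 k l m2 hm2) (Ne.symm hij) h5).elim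
                · rw [if_neg p2] at hab
                  injection hab with hd
                  rcases hFL i j k l hij hkl hd with ⟨h1, h2⟩ | hil | hjk
                  · exact ⟨h1, h2⟩
                  · exfalso
                    apply p1
                    refine ⟨k, ?_⟩
                    rw [← hil] at hd
                    exact sub_eq_iff_eq_add.mp hd.symm
                  · exfalso
                    apply p2
                    refine ⟨i, ?_⟩
                    rw [hjk] at hd
                    exact sub_eq_iff_eq_add.mp hd
    · exfalso
      replace hij : i ≠ j := hij
      simp only [psi, Sum.elim_inl, Sum.elim_inr] at hab
      by_cases c1 : 2 • (s i - s j) = 0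
      · rw [dif_pos c1] at hab
        by_cases o1 : i < j
        · rw [if_pos o1] at hab
          injection hab with hd
          exact hs.ne hij (sub_eq_zero.mp hd)
        · rw [if_neg o1] at hab
          exact absurd hab (by simp)
      · rw [dif_neg c1] at hab
        by_cases q1 : ∃ m, s m = (s i - s j) + s i ∧ j < m
        · rw [if_pos q1] at hab
          injection hab with hd
          exact hL1 i hd
        · rw [if_neg q1] at hab
          by_cases p1 : ∃ m, s m = (s i - s j) + s i
          · rw [if_pos p1] at hab
            injection hab with hd
            exact hL1 i (neg_eq_zero.mp hd)
          · rw [if_neg p1] at hab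
            injection hab with hd
            exact hs.ne hij (sub_eq_zero.mp hd)
    · exfalso
      replace hkl : k ≠ l := hkl
      simp only [psi, Sum.elim_inl, Sum.elim_inr] at hab
      replace hab := hab.symm
      by_cases c2 : 2 • (s k - s l) = 0
      · rw [dif_pos c2] at hab
        by_cases o2 : k < l
        · rw [if_pos o2] at hab
          injection hab with hd
          exact hs.ne hkl (sub_eq_zero.mp hd)
        · rw [if_neg o2] at hab
          exact absurd hab (by simp)
      · rw [dif_neg c2] at hab
        by_cases q2 : ∃ m, s m = (s k - s l) + s k ∧ l < m
        · rw [if_pos q2] at hab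
          injection hab with hd
          exact hL1 k hd
        · rw [if_neg q2] at hab
          by_cases p2 : ∃ m, s m = (s k - s l) + s k
          · rw [if_pos p2] at hab
            injection hab with hd
            exact hL1 k (neg_eq_zero.mp hd)
          · rw [if_neg p2] at hab
            injection hab with hd
            exact hs.ne hkl (sub_eq_zero.mp hd)
    · exact congrArg Sum.inr (Subsingleton.elim u v)
  have hcard := Fintype.card_le_of_injective _ hinj
  rw [Fintype.card_sum, Fintype.card_sum] at hcard
  have hDom : Fintype.card {p : Fin n × Fin n // p.1 ≠ p.2} = n * n - n := by
    rw [Fintype.card_subtype]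
    have he : (univ.filter fun p : Fin n × Fin n => p.1 ≠ p.2) =
        (univ : Finset (Fin n)).offDiag := by
      ext p
      simp [Finset.mem_offDiag]
    rw [he, Finset.offDiag_card, Finset.card_univ, Fintype.card_fin]
  have hCod : Fintype.card {x : G // x ≠ 0 ∧ 2 • x = 0} =
      {x : G | x ≠ 0 ∧ 2 • x = 0}.ncard := by
    rw [Set.ncard_eq_toFinset_card', Set.toFinset_setOf, Fintype.card_subtype]
  rw [hDom, hCod, Fintype.card_unit] at hcard
  have hnn : n ≤ n * n := Nat.le_mul_of_pos_left n hn
  rw [pow_two]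
  omega
end
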